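/- Let (X_n)_{n≥0} be a transient, weakly symmetric, suffix-irreducible random walk on a regular language over a finite alphabet 𝒜. Let w₁ = a₁…a_m and w₂ = b₁…b_n be words of length ≥ 2 with a_i, b_j ∈ 𝒜 such that C([w₁]) = C([w₂]) (i.e. the cones C(w₁) and C(w₂) are isomorphic). Then the map φ: C(w₁) → C(w₂) defined by φ(a₁…a_{m−2} w̄) = b₁…b_{n−2} w̄ for every w̄ ∈ 𝒜* of length ≥ 2 with a₁…a_{m−2} w̄ ∈ C(w₁) is a well-defined bijection from C(w₁) onto C(w₂) which preserves the adjacency relation: for all w', w'' ∈ C(w₁), the one-step transition probability from w' to w'' is positive if and only if the one-step transition probability from φ(w') to φ(w'') is positive. -/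
import Mathlib


open MeasureTheory Filter Topology
open scoped ENNReal Classical

/-- A random walk on a regular language over the finite alphabet `A`:
a Markov chain on finite words whose one-step transitions replace at most the last
two letters of the current word by a (nonempty, from long words) word of length at
most three, with probabilities `p` depending only on the last two letters of the
current word and on the replacing word. -/
structure RLRW (A : Type) [Fintype A] [DecidableEq A] where
  /-- the local transition probabilities -/
  p : List A → List A → ℝ
  /-- the full one-step transition probabilities between words -/
  step : List A → List A → ℝ
  step_nonneg : ∀ u v, 0 ≤ step u v
  step_hasSum : ∀ u, HasSum (step u) 1
  /-- from a word of length `≥ 2`, the last two letters are replaced by a word of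
  length `1`, `2` or `3`, with probability depending only on these data -/
  step_long : ∀ (w x y : List A), x.length = 2 → 1 ≤ y.length → y.length ≤ 3 →
    step (w ++ x) (w ++ y) = p x y
  /-- transitions from words of length `≤ 1` -/
  step_short : ∀ (x y : List A), x.length ≤ 1 → y.length ≤ x.length + 1 → step x y = p x y
  /-- no other transition is possible -/
  step_support : ∀ u v, 0 < step u v →
    ∃ w x y : List A, u = w ++ x ∧ v = w ++ y ∧ x.length = min u.length 2 ∧
      y.length ≤ x.length + 1 ∧ x.length ≤ y.length + 1

namespace RLRW

variable {A : Type} [Fintype A] [DecidableEq A]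

/-- `n`-step transition probabilities `p⁽ⁿ⁾(u,v)`. -/
noncomputable def pstep (M : RLRW A) : ℕ → List A → List A → ℝ
  | 0, u, v => if u = v then 1 else 0
  | (n + 1), u, v => ∑' w : List A, M.pstep n u w * M.step w v

/-- `n`-step transition probabilities where all the words visited at times `1,…,n`
are required to lie in the set `S`. -/
noncomputable def pstepIn (M : RLRW A) (S : Set (List A)) : ℕ → List A → List A → ℝ
  | 0, u, v => if u = v then 1 else 0
  | (n + 1), u, v => if v ∈ S then ∑' w : List A, M.pstepIn S n u w * M.step w v else 0

/-- The set `ℒ` of words accessible from the empty word. -/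
def Lang (M : RLRW A) : Set (List A) := {w | ∃ n, 0 < M.pstep n [] w}

/-- Weak symmetry of the random walk. -/
def WeaklySymmetric (M : RLRW A) : Prop := ∀ u v, 0 < M.step u v → 0 < M.step v u

/-- Suffix-irreducibility of the random walk. -/
def SuffixIrreducible (M : RLRW A) : Prop :=
  ∀ (w₀ : List A) (a₀ b₀ : A), w₀ ++ [a₀, b₀] ∈ M.Lang → ∀ a b : A,
    ∃ (n : ℕ) (w₁ : List A),
      0 < M.pstepIn {v | (w₀ ++ [a₀, b₀]).length ≤ v.length} n (w₀ ++ [a₀, b₀])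
          (w₀ ++ w₁ ++ [a, b])

/-- Transience of the random walk restricted to `ℒ` (finiteness of the Green function). -/
def Transient (M : RLRW A) : Prop := ∀ w ∈ M.Lang, Summable fun n => M.pstep n w w

/-- Recurrence of the random walk restricted to `ℒ`. -/
def Recurrent (M : RLRW A) : Prop := ∀ w ∈ M.Lang, ¬ Summable fun n => M.pstep n w w

/-- The entropy sequence `E[-log π_n(X_n)] = ∑_w π_n(w)·(-log π_n(w))`, where `π_n`
is the distribution of `X_n`. -/
noncomputable def entropySeq (M : RLRW A) (n : ℕ) : ℝ :=
  ∑' w : List A, M.pstep n [] w * (-Real.log (M.pstep n [] w))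

/-- `X` is (a version of) the random walk given by `M`, started at the empty word,
on the probability space `(Ω, P)`: its finite-dimensional distributions are the ones
prescribed by the one-step transition probabilities. -/
def IsRandomWalk (M : RLRW A) {Ω : Type} [MeasurableSpace Ω] (P : Measure Ω)
    (X : ℕ → Ω → List A) : Prop :=
  ∀ (n : ℕ) (w : ℕ → List A),
    P {ω | ∀ i ≤ n, X i ω = w i} =
      ENNReal.ofReal ((if w 0 = ([] : List A) then 1 else 0) *
        ∏ i ∈ Finset.range n, M.step (w i) (w (i + 1)))

/-- The word formed by the last two letters of `w`. -/
def lastTwo (w : List A) : List A := w.drop (w.length - 2)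

/-- The cone rooted at `w₀`: all words `w` of length `≥ |w₀|` reachable from `w₀` by a
path through words of length `≥ |w₀|`. -/
def Cone (M : RLRW A) (w₀ : List A) : Set (List A) :=
  {w | ∃ (n : ℕ) (f : ℕ → List A), f 0 = w₀ ∧ f n = w ∧
    (∀ i ≤ n, w₀.length ≤ (f i).length) ∧ ∀ i < n, 0 < M.step (f i) (f (i + 1))}

/-- The boundary `∂C(w)` of a cone. -/
def coneBoundary (M : RLRW A) (w : List A) : Set (List A) :=
  {w' | w' ∈ M.Cone w ∧ w'.length = w.length ∧ ∃ w'', w'' ∉ M.Cone w ∧ 0 < M.step w' w''}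

/-- The random walk is expanding if every cone rooted at a word of `ℒ` contains two
disjoint proper subcones rooted at words of `ℒ`. -/
def Expanding (M : RLRW A) : Prop :=
  ∀ w₀ ∈ M.Lang, 2 ≤ w₀.length →
    ∃ w₁ w₂ : List A, w₁ ∈ M.Lang ∧ w₂ ∈ M.Lang ∧ w₁ ∈ M.Cone w₀ ∧ w₂ ∈ M.Cone w₀ ∧
      M.Cone w₁ ⊂ M.Cone w₀ ∧ M.Cone w₂ ⊂ M.Cone w₀ ∧ M.Cone w₁ ∩ M.Cone w₂ = ∅

/-- Probability of a first visit to `v` at time exactly `n` (for `n ≥ 1`),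
starting from `u`. -/
noncomputable def firstVisit (M : RLRW A) : ℕ → List A → List A → ℝ
  | 0, _, _ => 0
  | 1, u, v => M.step u v
  | (n + 2), u, v => ∑' w : List A, if w = v then 0 else M.step u w * M.firstVisit (n + 1) w v

/-- The hitting probability `P[∃ n ≥ 0 : X_n = v | X_0 = u]`. -/
noncomputable def hitProb (M : RLRW A) (u v : List A) : ℝ :=
  if u = v then 1 else ∑' n : ℕ, M.firstVisit n u v

/-- The Greenian distance `d_Green(u,v) = - log P[∃ n ≥ 0 : X_n = v | X_0 = u]`. -/
noncomputable def dGreen (M : RLRW A) (u v : List A) : ℝ := -Real.log (M.hitProb u v)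

/-- The last-visit generating function `L(o,w|1)`. -/
noncomputable def lastVisitGF (M : RLRW A) (w : List A) : ℝ :=
  ∑' n : ℕ, M.pstepIn {v | v ≠ ([] : List A)} n [] w

end RLRW


namespace RLRW

variable {A : Type} [Fintype A] [DecidableEq A]

lemma step_prefix (M : RLRW A) (P₁ P₂ s t : List A)
    (hs : 2 ≤ s.length) (ht : 2 ≤ t.length)
    (h : 0 < M.step (P₁ ++ s) (P₁ ++ t)) :
    M.step (P₂ ++ s) (P₂ ++ t) = M.step (P₁ ++ s) (P₁ ++ t) := by
  obtain ⟨w, x, y, hu, hv, hx, hy1, hy2⟩ := M.step_support _ _ h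
  have hx2 : x.length = 2 := by
    rw [hx]; simp [List.length_append]; omega
  set k := s.length - 2 with hk
  have hsd : (s.drop k).length = 2 := by simp [hk]; omega
  have hsplit : (P₁ ++ s.take k) ++ s.drop k = w ++ x := by
    rw [List.append_assoc, List.take_append_drop]; exact hu
  obtain ⟨hw, hxeq⟩ := List.append_inj' hsplit (by rw [hsd, hx2])
  have hteq : t = s.take k ++ y := by
    apply List.append_cancel_left (as := P₁)
    rw [hv, ← hw, List.append_assoc]
  have hyl1 : 1 ≤ y.length := by omega
  have hyl3 : y.length ≤ 3 := by omega
  have e₁ : M.step (P₁ ++ s) (P₁ ++ t) = M.p (s.drop k) y := by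
    conv_lhs => rw [← List.take_append_drop k s, hteq]
    rw [← List.append_assoc, ← List.append_assoc]
    exact M.step_long _ _ _ hsd hyl1 hyl3
  have e₂ : M.step (P₂ ++ s) (P₂ ++ t) = M.p (s.drop k) y := by
    conv_lhs => rw [← List.take_append_drop k s, hteq]
    rw [← List.append_assoc, ← List.append_assoc]
    exact M.step_long _ _ _ hsd hyl1 hyl3
  rw [e₁, e₂]

lemma step_prefix_pos (M : RLRW A) (P₁ P₂ s t : List A)
    (hs : 2 ≤ s.length) (ht : 2 ≤ t.length)
    (h : 0 < M.step (P₁ ++ s) (P₁ ++ t)) : 0 < M.step (P₂ ++ s) (P₂ ++ t) := by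
  rw [M.step_prefix P₁ P₂ s t hs ht h]; exact h

lemma step_take (M : RLRW A) (u v : List A) (L : ℕ)
    (hL : 2 ≤ L) (hu : L ≤ u.length) (hv : L ≤ v.length) (h : 0 < M.step u v) :
    u.take (L - 2) = v.take (L - 2) := by
  obtain ⟨w, x, y, huu, hvv, hx, hy1, hy2⟩ := M.step_support _ _ h
  have hx2 : x.length = 2 := by rw [hx]; omega
  have hwl : L - 2 ≤ w.length := by
    have := congrArg List.length huu
    simp [List.length_append] at this
    omega
  rw [huu, hvv, List.take_append_of_le_length hwl, List.take_append_of_le_length hwl]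

lemma length_of_mem_cone (M : RLRW A) {w u : List A} (h : u ∈ M.Cone w) :
    w.length ≤ u.length := by
  obtain ⟨n, f, hf0, hfn, hlen, hstep⟩ := h
  rw [← hfn]; exact hlen n le_rfl

lemma mem_cone_iff (M : RLRW A) (w : List A) (hw : 2 ≤ w.length) (u : List A) :
    u ∈ M.Cone w ↔ u.take (w.length - 2) = w.take (w.length - 2) ∧
      u.drop (w.length - 2) ∈ M.Cone (RLRW.lastTwo w) := by
  have hlt : (RLRW.lastTwo w).length = 2 := by
    simp only [RLRW.lastTwo, List.length_drop]; omega
  constructor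
  · rintro ⟨n, f, hf0, hfn, hlen, hstep⟩
    have htake : ∀ i, i ≤ n → (f i).take (w.length - 2) = w.take (w.length - 2) := by
      intro i
      induction i with
      | zero => intro _; rw [hf0]
      | succ j ih =>
        intro hi
        rw [← ih (by omega)]
        exact (M.step_take _ _ w.length hw (hlen j (by omega)) (hlen (j+1) hi)
          (hstep j (by omega))).symm
    refine ⟨hfn ▸ htake n le_rfl, n, fun i => (f i).drop (w.length - 2), ?_, ?_, ?_, ?_⟩
    · simp only [hf0, RLRW.lastTwo]
    · simp only [hfn]
    · intro i hi
      have := hlen i hi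
      simp only [List.length_drop, hlt]
      omega
    · intro i hi
      have h1 : f i = w.take (w.length - 2) ++ (f i).drop (w.length - 2) := by
        conv_lhs => rw [← List.take_append_drop (w.length - 2) (f i)]
        rw [htake i (by omega)]
      have h2 : f (i+1) = w.take (w.length - 2) ++ (f (i+1)).drop (w.length - 2) := by
        conv_lhs => rw [← List.take_append_drop (w.length - 2) (f (i+1))]
        rw [htake (i+1) hi]
      have hli : 2 ≤ ((f i).drop (w.length - 2)).length := by
        have := hlen i (by omega); simp only [List.length_drop]; omega
      have hli' : 2 ≤ ((f (i+1)).drop (w.length - 2)).length := by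
        have := hlen (i+1) hi; simp only [List.length_drop]; omega
      have hpos : 0 < M.step (w.take (w.length - 2) ++ (f i).drop (w.length - 2))
          (w.take (w.length - 2) ++ (f (i+1)).drop (w.length - 2)) := by
        rw [← h1, ← h2]; exact hstep i hi
      have := M.step_prefix_pos _ [] _ _ hli hli' hpos
      simpa using this
  · rintro ⟨htake, n, s, hs0, hsn, hlen, hstep⟩
    refine ⟨n, fun i => w.take (w.length - 2) ++ s i, ?_, ?_, ?_, ?_⟩
    · simp only [hs0, RLRW.lastTwo, List.take_append_drop]
    · simp only [hsn]
      conv_rhs => rw [← List.take_append_drop (w.length - 2) u]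
      rw [htake]
    · intro i hi
      have := hlen i hi
      rw [hlt] at this
      simp only [List.length_append, List.length_take]
      omega
    · intro i hi
      have h2 : 2 ≤ (s i).length := by have := hlen i (by omega); omega
      have h2' : 2 ≤ (s (i+1)).length := by have := hlen (i+1) hi; omega
      exact M.step_prefix_pos [] _ _ _ h2 h2' (by simpa using hstep i hi)

end RLRW

/-- For a transient, weakly symmetric, suffix-irreducible random walk
on a regular language, if `w₁ = a₁…a_m` and `w₂ = b₁…b_n` are words of length `≥ 2`
whose cones are isomorphic (`C([w₁]) = C([w₂])`), then the map
`φ(a₁…a_{m-2} w̄) = b₁…b_{n-2} w̄` is a well-defined bijection from `C(w₁)` onto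
`C(w₂)` preserving the adjacency relation. -/
theorem cone_isomorphism
    {A : Type} [Fintype A] [DecidableEq A] (M : RLRW A)
    (hT : M.Transient) (hWS : M.WeaklySymmetric) (hSI : M.SuffixIrreducible)
    (w₁ w₂ : List A) (h₁ : 2 ≤ w₁.length) (h₂ : 2 ≤ w₂.length)
    (hiso : M.Cone (RLRW.lastTwo w₁) = M.Cone (RLRW.lastTwo w₂)) :
    (∀ u ∈ M.Cone w₁,
        u.take (w₁.length - 2) = w₁.take (w₁.length - 2) ∧
          2 ≤ (u.drop (w₁.length - 2)).length) ∧
    Set.BijOn (fun u : List A => w₂.take (w₂.length - 2) ++ u.drop (w₁.length - 2))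
      (M.Cone w₁) (M.Cone w₂) ∧
    (∀ u ∈ M.Cone w₁, ∀ v ∈ M.Cone w₁,
      (0 < M.step u v ↔
        0 < M.step (w₂.take (w₂.length - 2) ++ u.drop (w₁.length - 2))
              (w₂.take (w₂.length - 2) ++ v.drop (w₁.length - 2)))) := by
  have hl₁ : (RLRW.lastTwo w₁).length = 2 := by
    simp only [RLRW.lastTwo, List.length_drop]; omega
  have hl₂ : (RLRW.lastTwo w₂).length = 2 := by
    simp only [RLRW.lastTwo, List.length_drop]; omega
  have hP : (w₁.take (w₁.length - 2)).length = w₁.length - 2 := by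
    simp only [List.length_take]; omega
  have hQ : (w₂.take (w₂.length - 2)).length = w₂.length - 2 := by
    simp only [List.length_take]; omega
  refine ⟨?_, ⟨?_, ?_, ?_⟩, ?_⟩
  · intro u hu
    obtain ⟨ht, hd⟩ := (M.mem_cone_iff w₁ h₁ u).1 hu
    refine ⟨ht, ?_⟩
    have := M.length_of_mem_cone hd
    omega
  · -- MapsTo
    intro u hu
    obtain ⟨ht, hd⟩ := (M.mem_cone_iff w₁ h₁ u).1 hu
    refine (M.mem_cone_iff w₂ h₂ _).2 ⟨?_, ?_⟩
    · exact List.take_left' hQ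
    · rw [List.drop_left' hQ, ← hiso]
      exact hd
  · -- InjOn
    intro u hu v hv h
    obtain ⟨htu, hdu⟩ := (M.mem_cone_iff w₁ h₁ u).1 hu
    obtain ⟨htv, hdv⟩ := (M.mem_cone_iff w₁ h₁ v).1 hv
    simp only at h
    have hdd := List.append_cancel_left h
    have e : u.take (w₁.length - 2) ++ u.drop (w₁.length - 2)
        = v.take (w₁.length - 2) ++ v.drop (w₁.length - 2) := by
      rw [htu, htv, hdd]
    simpa only [List.take_append_drop] using e
  · -- SurjOn
    intro v hv
    obtain ⟨htv, hdv⟩ := (M.mem_cone_iff w₂ h₂ v).1 hv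
    refine ⟨w₁.take (w₁.length - 2) ++ v.drop (w₂.length - 2), ?_, ?_⟩
    · refine (M.mem_cone_iff w₁ h₁ _).2 ⟨List.take_left' hP, ?_⟩
      rw [List.drop_left' hP, hiso]
      exact hdv
    · simp only
      rw [List.drop_left' hP]
      conv_rhs => rw [← List.take_append_drop (w₂.length - 2) v]
      rw [htv]
  · -- adjacency
    intro u hu v hv
    obtain ⟨htu, hdu⟩ := (M.mem_cone_iff w₁ h₁ u).1 hu
    obtain ⟨htv, hdv⟩ := (M.mem_cone_iff w₁ h₁ v).1 hv
    have hlu : 2 ≤ (u.drop (w₁.length - 2)).length := by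
      have := M.length_of_mem_cone hdu; omega
    have hlv : 2 ≤ (v.drop (w₁.length - 2)).length := by
      have := M.length_of_mem_cone hdv; omega
    have hu' : u = w₁.take (w₁.length - 2) ++ u.drop (w₁.length - 2) := by
      conv_lhs => rw [← List.take_append_drop (w₁.length - 2) u]
      rw [htu]
    have hv' : v = w₁.take (w₁.length - 2) ++ v.drop (w₁.length - 2) := by
      conv_lhs => rw [← List.take_append_drop (w₁.length - 2) v]
      rw [htv]
    constructor
    · intro h
      rw [hu', hv'] at h
      exact M.step_prefix_pos _ _ _ _ hlu hlv h
    · intro h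
      rw [hu', hv']
      exact M.step_prefix_pos _ _ _ _ hlu hlv h
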